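/- Let C be the category whose objects are the natural numbers and whose morphisms m ⟶ n are all functions Fin(m+1) → Fin(n+1), let D be the wide subcategory of C with only the injective functions, ι : D ⥤ C the inclusion, and H the left Kan extension functor (Dᵒᵖ ⥤ Type) ⥤ (Cᵒᵖ ⥤ Type) along ιᵒᵖ. Then for every presheaf S : Dᵒᵖ ⥤ Type, the simplicial set H(S) is nondegenerate: for every injective function α : Fin(m+1) → Fin(n+1) (a morphism of D), the induced map H(S)(n) → H(S)(m) sends nondegenerate n-simplices to nondegenerate m-simplices. -/

import Mathlib

open CategoryTheory Opposite

/-- The category whose objects are the natural numbers and whose morphisms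
`m ⟶ n` are all functions `Fin (m+1) → Fin (n+1)`. -/
structure UCat where
  len : ℕ

instance : Category UCat where
  Hom a b := Fin (a.len + 1) → Fin (b.len + 1)
  id _ := id
  comp f g := g ∘ f

/-- The wide subcategory of `UCat` with only the injective functions. -/
structure UDCat where
  len : ℕ

instance : Category UDCat where
  Hom a b := {f : Fin (a.len + 1) → Fin (b.len + 1) // Function.Injective f}
  id _ := ⟨id, Function.injective_id⟩
  comp f g := ⟨g.1 ∘ f.1, g.2.comp f.2⟩

/-- The inclusion functor. -/
def inclUDC : UDCat ⥤ UCat where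
  obj a := ⟨a.len⟩
  map f := f.1

/-- An `x`-simplex `γ` of an unoriented simplicial set `F` is degenerate if
`x.len ≥ 1` and `γ` lies in the image of the map `F(g)` induced by some function
`g : Fin (x.len + 1) → Fin x.len`. -/
def IsDegenerate (F : UCatᵒᵖ ⥤ Type) (x : UCat) (γ : F.obj (op x)) : Prop :=
  ∃ m : UCat, x.len = m.len + 1 ∧ ∃ g : x ⟶ m, γ ∈ Set.range (F.map g.op)

/-- An unoriented simplicial set is nondegenerate if the maps induced by injective
functions take nondegenerate simplices to nondegenerate ones. -/
def IsNondegenerateSSet (F : UCatᵒᵖ ⥤ Type) : Prop :=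
  ∀ (a b : UCat) (α : a ⟶ b), Function.Injective α →
    ∀ γ : F.obj (op b), ¬ IsDegenerate F b γ → ¬ IsDegenerate F a (F.map α.op γ)

namespace Stmt13Aux

variable (S : UDCatᵒᵖ ⥤ Type)

/-- Representatives of simplices of the explicit Kan extension model. -/
def Elt (n : ℕ) : Type :=
  Σ d : ℕ, (Fin (n + 1) → Fin (d + 1)) × S.obj (op (⟨d⟩ : UDCat))

/-- One-step relation generating the colimit. -/
def Rel (n : ℕ) : Elt S n → Elt S n → Prop := fun x y =>
  ∃ j : (⟨y.1⟩ : UDCat) ⟶ (⟨x.1⟩ : UDCat),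
    x.2.1 = j.1 ∘ y.2.1 ∧ y.2.2 = S.map j.op x.2.2

/-- The explicit model of the left Kan extension of `S`. -/
def F0 : UCatᵒᵖ ⥤ Type where
  obj X := Quot (Rel S X.unop.len)
  map {X Y} α := TypeCat.ofHom (Quot.lift
    (fun (t : Elt S X.unop.len) => Quot.mk (Rel S Y.unop.len) ⟨t.1, (t.2.1 ∘ α.unop, t.2.2)⟩)
    (by
      rintro ⟨d₁, f₁, s₁⟩ ⟨d₂, f₂, s₂⟩ ⟨j, hj1, hj2⟩
      exact Quot.sound ⟨j, by rw [hj1]; rfl, hj2⟩))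
  map_id X := by
    ext γ
    induction γ using Quot.ind
    rfl
  map_comp f g := by
    ext γ
    induction γ using Quot.ind
    rfl

/-- Injectivity of the structure map is an invariant of the colimit. -/
def InjP (x : UCat) : (F0 S).obj (op x) → Prop :=
  Quot.lift (fun (t : Elt S x.len) => Function.Injective t.2.1)
    (by
      rintro ⟨d₁, f₁, s₁⟩ ⟨d₂, f₂, s₂⟩ ⟨j, hj1, hj2⟩
      show Function.Injective f₁ = Function.Injective f₂
      rw [show f₁ = j.1 ∘ f₂ from hj1]
      exact propext (j.2.of_comp_iff f₂))

lemma deg_of_not_inj (x : UCat) (γ : (F0 S).obj (op x)) (h : ¬ InjP S x γ) :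
    IsDegenerate (F0 S) x γ := by
  classical
  obtain ⟨⟨d, f, s⟩, rfl⟩ := Quot.exists_rep γ
  have hf : ¬ Function.Injective f := h
  rw [Function.not_injective_iff] at hf
  obtain ⟨a₀, b₀, hfab, hne⟩ := hf
  obtain ⟨n⟩ := x
  cases n with
  | zero => exact absurd (Subsingleton.elim (α := Fin 1) a₀ b₀) hne
  | succ n =>
    set e : Fin (n + 1) → Fin (n + 2) := b₀.succAbove with he
    set g : Fin (n + 2) → Fin (n + 1) := fun i =>
      if hi : i = b₀ then Classical.choose (Fin.exists_succAbove_eq hne)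
      else Classical.choose (Fin.exists_succAbove_eq hi) with hg
    have key : ∀ i, f (e (g i)) = f i := by
      intro i
      by_cases hi : i = b₀
      · subst hi
        simp only [hg, dif_pos rfl, he]
        rw [Classical.choose_spec (Fin.exists_succAbove_eq hne)]
        exact hfab
      · simp only [hg, dif_neg hi, he]
        rw [Classical.choose_spec (Fin.exists_succAbove_eq hi)]
    refine ⟨⟨n⟩, rfl, g, Quot.mk _ ⟨d, (f ∘ e, s)⟩, ?_⟩
    have hc : (f ∘ e) ∘ g = f := funext key
    exact congrArg (fun q => Quot.mk (Rel S (unop (op (⟨n+1⟩ : UCat))).len)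
      (⟨d, (q, s)⟩ : Elt S (unop (op (⟨n+1⟩ : UCat))).len)) hc

lemma F0_nondeg : IsNondegenerateSSet (F0 S) := by
  intro a b α hα γ hnd hdeg
  have hinj : InjP S b γ := by
    by_contra h
    exact hnd (deg_of_not_inj S b γ h)
  obtain ⟨⟨d, f, s⟩, rfl⟩ := Quot.exists_rep γ
  have hfinj : Function.Injective f := hinj
  obtain ⟨m, hm, g, δ, hδ⟩ := hdeg
  obtain ⟨⟨d', f', s'⟩, rfl⟩ := Quot.exists_rep δ
  have hδ' : Quot.mk (Rel S (unop (op a)).len) (⟨d', (f' ∘ g, s')⟩ : Elt S (unop (op a)).len)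
      = Quot.mk (Rel S (unop (op a)).len) ⟨d, (f ∘ α, s)⟩ := hδ
  have hP := congrArg (InjP S a) hδ'
  have hfg : Function.Injective (f' ∘ g) := by
    have h2 : InjP S a (Quot.mk (Rel S (unop (op a)).len)
        (⟨d, (f ∘ α, s)⟩ : Elt S (unop (op a)).len)) := hfinj.comp hα
    rw [← hP] at h2
    exact h2
  obtain ⟨i, j', hij, heq⟩ := Fintype.exists_ne_map_eq_of_card_lt g
    (by simp only [Fintype.card_fin]; omega)
  exact hij (hfg (show (f' ∘ g) i = (f' ∘ g) j' from congrArg f' heq))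

variable (H : (UDCatᵒᵖ ⥤ Type) ⥤ (UCatᵒᵖ ⥤ Type))
    (adj : H ⊣ (Functor.whiskeringLeft UDCatᵒᵖ UCatᵒᵖ Type).obj inclUDC.op)

/-- The comparison map from the explicit model to the abstract Kan extension. -/
def Φ : F0 S ⟶ H.obj S where
  app X := TypeCat.ofHom (Quot.lift
    (fun (t : Elt S X.unop.len) => (H.obj S).map (show X.unop ⟶ (⟨t.1⟩ : UCat) from t.2.1).op
      ((adj.unit.app S).app (op (⟨t.1⟩ : UDCat)) t.2.2))
    (by
      rintro ⟨d₁, f₁, s₁⟩ ⟨d₂, f₂, s₂⟩ ⟨j, hj1, hj2⟩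
      show (H.obj S).map (Quiver.Hom.op f₁) ((adj.unit.app S).app (op (⟨d₁⟩ : UDCat)) s₁)
        = (H.obj S).map (Quiver.Hom.op f₂) ((adj.unit.app S).app (op (⟨d₂⟩ : UDCat)) s₂)
      rw [show s₂ = S.map j.op s₁ from hj2]
      have hnat' : (adj.unit.app S).app (op (⟨d₂⟩ : UDCat)) (S.map j.op s₁)
          = (H.obj S).map (inclUDC.map j).op
            ((adj.unit.app S).app (op (⟨d₁⟩ : UDCat)) s₁) :=
        NatTrans.naturality_apply (adj.unit.app S) j.op s₁
      rw [hnat']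
      refine Eq.trans ?_ ((H.obj S).map_comp_apply _ _ _)
      exact congrArg (fun q => (H.obj S).map (Quiver.Hom.op q)
        ((adj.unit.app S).app (op (⟨d₁⟩ : UDCat)) s₁)) (show f₁ = j.1 ∘ f₂ from hj1)))
  naturality {X Y} α := by
    ext γ
    induction γ using Quot.ind with | _ t =>
    obtain ⟨d, f, s⟩ := t
    show (H.obj S).map (show Y.unop ⟶ (⟨d⟩ : UCat) from f ∘ α.unop).op _
      = (H.obj S).map α ((H.obj S).map (show X.unop ⟶ (⟨d⟩ : UCat) from f).op _)
    exact (H.obj S).map_comp_apply _ _ _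

/-- The unit-like map into the explicit model. -/
def u : S ⟶ ((Functor.whiskeringLeft UDCatᵒᵖ UCatᵒᵖ Type).obj inclUDC.op).obj (F0 S) where
  app X := TypeCat.ofHom fun s => Quot.mk _ (⟨X.unop.len, (id, s)⟩ : Elt S X.unop.len)
  naturality {X Y} ξ := by
    ext s
    have hr : Rel S (unop (inclUDC.op.obj Y)).len
        ⟨(unop X).len, ((id : Fin ((unop X).len + 1) → Fin ((unop X).len + 1)) ∘ ξ.unop.1, s)⟩
        ⟨(unop Y).len, (id, S.map ξ s)⟩ := ⟨ξ.unop, rfl, rfl⟩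
    exact (Quot.sound hr).symm

/-- The inverse comparison map, from the adjunction. -/
def Ψ : H.obj S ⟶ F0 S := (adj.homEquiv S (F0 S)).symm (u S)

lemma Psi_Phi : Ψ S H adj ≫ Φ S H adj = 𝟙 (H.obj S) := by
  apply (adj.homEquiv S (H.obj S)).injective
  rw [Adjunction.homEquiv_naturality_right, Ψ, Equiv.apply_symm_apply,
    Adjunction.homEquiv_unit]
  ext X s
  show (Φ S H adj).app (inclUDC.op.obj X) (Quot.mk _ ⟨X.unop.len, (id, s)⟩)
    = (adj.unit.app S).app X s
  show (H.obj S).map (𝟙 (op (⟨X.unop.len⟩ : UCat))) _ = _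
  exact (H.obj S).map_id_apply _ _

end Stmt13Aux

/-- for any left adjoint `H` of the restriction functor along `ιᵒᵖ`
and any presheaf `S` on the injective category, `H(S)` is nondegenerate. -/
theorem stmt13 (H : (UDCatᵒᵖ ⥤ Type) ⥤ (UCatᵒᵖ ⥤ Type))
    (adj : H ⊣ (Functor.whiskeringLeft UDCatᵒᵖ UCatᵒᵖ Type).obj inclUDC.op)
    (S : UDCatᵒᵖ ⥤ Type) :
    IsNondegenerateSSet (H.obj S) := by
  intro a b α hα γ hnd hdeg
  open Stmt13Aux in
  have hΨΦ : ∀ (x : UCat) (t : (H.obj S).obj (op x)),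
      (Φ S H adj).app (op x) ((Ψ S H adj).app (op x) t) = t := by
    intro x t
    have := congrArg (fun (σ : H.obj S ⟶ H.obj S) => σ.app (op x) t) (Psi_Phi S H adj)
    exact this
  have h1 : ¬ IsDegenerate (Stmt13Aux.F0 S) b ((Stmt13Aux.Ψ S H adj).app (op b) γ) := by
    rintro ⟨m, hm, g, ρ, hρ⟩
    apply hnd
    refine ⟨m, hm, g, (Stmt13Aux.Φ S H adj).app (op m) ρ, ?_⟩
    have := NatTrans.naturality_apply (Stmt13Aux.Φ S H adj) g.op ρ
    rw [← this, hρ, hΨΦ]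
  have h2 : IsDegenerate (Stmt13Aux.F0 S) a
      ((Stmt13Aux.F0 S).map α.op ((Stmt13Aux.Ψ S H adj).app (op b) γ)) := by
    obtain ⟨m, hm, g, δ, hδ⟩ := hdeg
    refine ⟨m, hm, g, (Stmt13Aux.Ψ S H adj).app (op m) δ, ?_⟩
    have n1 := NatTrans.naturality_apply (Stmt13Aux.Ψ S H adj) g.op δ
    have n2 := NatTrans.naturality_apply (Stmt13Aux.Ψ S H adj) α.op γ
    rw [← n1, hδ, n2]
  exact Stmt13Aux.F0_nondeg S a b α hα _ h1 h2
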